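/- Fix an integer d ≥ 3 and x ∈ (0,1). For every z with 0 < z < 1/2 and zx < (1−x)/2, one has g_d(x,z) ≤ g_d(x, z₀(x)); that is, for fixed x the function z ↦ g_d(x,z) attains its maximum on this range at z = z₀(x). -/

import Mathlib

/-- The function $g_d(x,z)$ from the paper. -/
noncomputable def gFun (d : ℕ) (x z : ℝ) : ℝ :=
  ((d : ℝ)/2 - 1 - d * z) * x * Real.log x
    + ((d : ℝ) - 1) * (1 - x) * Real.log ((1 - x)/2)
    - 2 * d * x * z * Real.log z
    - (1 - 2*z) * d * x / 2 * Real.log (1 - 2*z)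
    - d * ((1 - x)/2 - z * x) * Real.log ((1 - x)/2 - z * x)

/-- The maximizer $z_0(x) = \frac{1-\sqrt{1-2(1-x)x}}{2x}$. -/
noncomputable def z0 (x : ℝ) : ℝ := (1 - Real.sqrt (1 - 2 * (1 - x) * x)) / (2 * x)

/-- The function $h_d(x) = g_d(x, z_0(x))$. -/
noncomputable def hFun (d : ℕ) (x : ℝ) : ℝ := gFun d x (z0 x)

/-- Derivative of `gFun d x` in the second variable. -/
lemma gFun_hasDerivAt (d : ℕ) (x w : ℝ) (hw0 : 0 < w) (hw1 : w < 1/2)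
    (hwx : w * x < (1 - x)/2) :
    HasDerivAt (fun z => gFun d x z)
      ((d : ℝ) * x * (Real.log (1 - 2*w) + Real.log ((1 - x)/2 - w*x)
        - Real.log x - 2 * Real.log w)) w := by
  have h2w : (0:ℝ) < 1 - 2*w := by linarith
  have hv : (0:ℝ) < (1 - x)/2 - w*x := by linarith
  have Ha : HasDerivAt (fun z : ℝ => 1 - 2*z) (-(2*1)) w :=
    HasDerivAt.const_sub 1 ((hasDerivAt_id w).const_mul 2)
  have Hb : HasDerivAt (fun z : ℝ => (1 - x)/2 - z*x) (-(1*x)) w :=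
    HasDerivAt.const_sub ((1-x)/2) ((hasDerivAt_id w).mul_const x)
  have H1 : HasDerivAt (fun z : ℝ => ((d:ℝ)/2 - 1 - d*z) * (x * Real.log x))
      (-((d:ℝ)*1) * (x * Real.log x)) w :=
    (HasDerivAt.const_sub ((d:ℝ)/2 - 1) ((hasDerivAt_id w).const_mul (d:ℝ))).mul_const _
  have H3 : HasDerivAt (fun z : ℝ => (2*(d:ℝ)*x) * (z * Real.log z))
      ((2*(d:ℝ)*x) * (Real.log w + 1)) w :=
    (Real.hasDerivAt_mul_log hw0.ne').const_mul _
  have H4 : HasDerivAt (fun z : ℝ => ((d:ℝ)*x/2) * ((1 - 2*z) * Real.log (1 - 2*z)))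
      (((d:ℝ)*x/2) * ((-(2*1)) * Real.log (1 - 2*w) + (1 - 2*w) * ((-(2*1)) / (1 - 2*w)))) w :=
    (Ha.mul (Ha.log h2w.ne')).const_mul _
  have H5 : HasDerivAt (fun z : ℝ => (d:ℝ) * (((1 - x)/2 - z*x) * Real.log ((1 - x)/2 - z*x)))
      ((d:ℝ) * ((-(1*x)) * Real.log ((1 - x)/2 - w*x)
        + ((1 - x)/2 - w*x) * ((-(1*x)) / ((1 - x)/2 - w*x)))) w :=
    (Hb.mul (Hb.log hv.ne')).const_mul _
  have H := (((H1.add_const (((d:ℝ) - 1) * (1 - x) * Real.log ((1 - x)/2))).sub H3).sub H4).sub H5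
  have e : (fun z => gFun d x z) = (fun z : ℝ =>
      ((d:ℝ)/2 - 1 - d*z) * (x * Real.log x) + ((d:ℝ) - 1) * (1 - x) * Real.log ((1 - x)/2)
      - (2*(d:ℝ)*x) * (z * Real.log z)
      - ((d:ℝ)*x/2) * ((1 - 2*z) * Real.log (1 - 2*z))
      - (d:ℝ) * (((1 - x)/2 - z*x) * Real.log ((1 - x)/2 - z*x))) := by
    funext z; simp only [gFun]; ring
  rw [e]
  have hA : (1 - 2*w) * ((-(2*1)) / (1 - 2*w)) = -2 := by rw [mul_comm, div_mul_cancel₀ _ h2w.ne']; ring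
  have hB : ((1 - x)/2 - w*x) * ((-(1*x)) / ((1 - x)/2 - w*x)) = -x := by rw [mul_comm, div_mul_cancel₀ _ hv.ne']; ring
  refine H.congr_deriv ?_
  rw [hA, hB]
  ring

set_option maxHeartbeats 1000000 in
/-- Fix an integer $d \ge 3$ and $x \in (0,1)$.  For every $z$ with
$0 < z < 1/2$ and $zx < (1-x)/2$ one has $g_d(x,z) \le g_d(x, z_0(x))$. -/
theorem gFun_le_gFun_z0 (d : ℕ) (hd : 3 ≤ d) (x : ℝ) (hx : x ∈ Set.Ioo (0 : ℝ) 1)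
    (z : ℝ) (hz0 : 0 < z) (hz1 : z < 1/2) (hzx : z * x < (1 - x)/2) :
    gFun d x z ≤ gFun d x (z0 x) := by
  obtain ⟨hx0, hx1⟩ := hx
  have hd0 : (0:ℝ) < d := by positivity
  set s : ℝ := Real.sqrt (1 - 2 * (1 - x) * x) with hs
  have hsarg : (0:ℝ) < 1 - 2 * (1 - x) * x := by nlinarith [sq_nonneg (1 - 2*x)]
  have hs2 : s^2 = 1 - 2 * (1 - x) * x := Real.sq_sqrt hsarg.le
  have hspos : 0 < s := Real.sqrt_pos.mpr hsarg
  have hs1 : s < 1 := by nlinarith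
  have hsgx : x < s := by nlinarith [sq_nonneg (1 - x)]
  have hsg1x : 1 - x < s := by nlinarith [sq_nonneg x]
  have hz0pos : 0 < z0 x := by
    rw [z0]; exact div_pos (by linarith) (by linarith)
  have hz0half : z0 x < 1/2 := by
    rw [z0, div_lt_iff₀ (by linarith)]; linarith
  have hz0mul : z0 x * x = (1 - s) / 2 := by
    rw [z0, ← hs, div_mul_eq_mul_div, div_eq_div_iff (by positivity) (by norm_num)]; ring
  have hz0x : z0 x * x < (1 - x)/2 := by rw [hz0mul]; linarith
  -- key quadratic identity
  have hquad : x * (z0 x)^2 - z0 x + (1 - x)/2 = 0 := by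
    rw [z0, ← hs]
    field_simp
    nlinarith [hs2]
  have hphi : ∀ w : ℝ, x*w^2 - w + (1 - x)/2 = (z0 x - w) * (1 - x*(w + z0 x)) := by
    intro w
    have : x*w^2 - w + (1 - x)/2
        = (z0 x - w) * (1 - x*(w + z0 x)) + (x * (z0 x)^2 - z0 x + (1 - x)/2) := by ring
    rw [this, hquad, add_zero]
  -- sign of the derivative bracket
  have hbracket : ∀ w : ℝ, 0 < w → w < 1/2 → w * x < (1 - x)/2 →
      Real.log (1 - 2*w) + Real.log ((1 - x)/2 - w*x) - Real.log x - 2 * Real.log w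
      = Real.log ((1 - 2*w) * ((1 - x)/2 - w*x)) - Real.log (x * w^2) := by
    intro w hw0 hw1 hwx
    have h2w : (0:ℝ) < 1 - 2*w := by linarith
    have hv : (0:ℝ) < (1 - x)/2 - w*x := by linarith
    rw [Real.log_mul h2w.ne' hv.ne', Real.log_mul hx0.ne' (by positivity : (w^2:ℝ) ≠ 0),
      Real.log_pow]
    push_cast; ring
  have hprod : ∀ w : ℝ, (1 - 2*w) * ((1 - x)/2 - w*x) = x*w^2 + (x*w^2 - w + (1 - x)/2) := by
    intro w; ring
  rcases lt_trichotomy z (z0 x) with hlt | heq | hgt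
  · -- monotone on [z, z0 x]
    have key : MonotoneOn (fun z => gFun d x z) (Set.Icc z (z0 x)) := by
      apply monotoneOn_of_deriv_nonneg (convex_Icc _ _)
      · intro w hw
        obtain ⟨hw1, hw2⟩ := hw
        have hw0 : 0 < w := lt_of_lt_of_le hz0 hw1
        have hwh : w < 1/2 := lt_of_le_of_lt hw2 hz0half
        have hwx : w * x < (1 - x)/2 :=
          lt_of_le_of_lt (mul_le_mul_of_nonneg_right hw2 hx0.le) hz0x
        exact (gFun_hasDerivAt d x w hw0 hwh hwx).continuousAt.continuousWithinAt
      · rw [interior_Icc]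
        intro w hw
        obtain ⟨hw1, hw2⟩ := hw
        have hw0 : 0 < w := lt_trans hz0 hw1
        have hwh : w < 1/2 := lt_trans hw2 hz0half
        have hwx : w * x < (1 - x)/2 :=
          lt_of_le_of_lt (mul_le_mul_of_nonneg_right hw2.le hx0.le) hz0x
        exact (gFun_hasDerivAt d x w hw0 hwh hwx).differentiableAt.differentiableWithinAt
      · rw [interior_Icc]
        intro w hw
        obtain ⟨hw1, hw2⟩ := hw
        have hw0 : 0 < w := lt_trans hz0 hw1
        have hwh : w < 1/2 := lt_trans hw2 hz0half
        have hwx : w * x < (1 - x)/2 :=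
          lt_of_le_of_lt (mul_le_mul_of_nonneg_right hw2.le hx0.le) hz0x
        rw [(gFun_hasDerivAt d x w hw0 hwh hwx).deriv]
        apply mul_nonneg (by positivity)
        rw [hbracket w hw0 hwh hwx, sub_nonneg]
        apply Real.log_le_log (by positivity)
        rw [hprod w, hphi w]
        nlinarith [mul_pos (by linarith : (0:ℝ) < z0 x - w)
          (by nlinarith : (0:ℝ) < 1 - x*(w + z0 x))]
    exact key (Set.left_mem_Icc.mpr hlt.le) (Set.right_mem_Icc.mpr hlt.le) hlt.le
  · exact le_of_eq (by rw [heq])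
  · -- antitone on [z0 x, z]
    have key : AntitoneOn (fun z => gFun d x z) (Set.Icc (z0 x) z) := by
      apply antitoneOn_of_deriv_nonpos (convex_Icc _ _)
      · intro w hw
        obtain ⟨hw1, hw2⟩ := hw
        have hw0 : 0 < w := lt_of_lt_of_le hz0pos hw1
        have hwh : w < 1/2 := lt_of_le_of_lt hw2 hz1
        have hwx : w * x < (1 - x)/2 :=
          lt_of_le_of_lt (mul_le_mul_of_nonneg_right hw2 hx0.le) hzx
        exact (gFun_hasDerivAt d x w hw0 hwh hwx).continuousAt.continuousWithinAt
      · rw [interior_Icc]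
        intro w hw
        obtain ⟨hw1, hw2⟩ := hw
        have hw0 : 0 < w := lt_trans hz0pos hw1
        have hwh : w < 1/2 := lt_trans hw2 hz1
        have hwx : w * x < (1 - x)/2 :=
          lt_of_le_of_lt (mul_le_mul_of_nonneg_right hw2.le hx0.le) hzx
        exact (gFun_hasDerivAt d x w hw0 hwh hwx).differentiableAt.differentiableWithinAt
      · rw [interior_Icc]
        intro w hw
        obtain ⟨hw1, hw2⟩ := hw
        have hw0 : 0 < w := lt_trans hz0pos hw1
        have hwh : w < 1/2 := lt_trans hw2 hz1
        have hwx : w * x < (1 - x)/2 :=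
          lt_of_le_of_lt (mul_le_mul_of_nonneg_right hw2.le hx0.le) hzx
        rw [(gFun_hasDerivAt d x w hw0 hwh hwx).deriv]
        apply mul_nonpos_of_nonneg_of_nonpos (by positivity)
        rw [hbracket w hw0 hwh hwx, sub_nonpos]
        have h2w : (0:ℝ) < 1 - 2*w := by linarith
        have hv : (0:ℝ) < (1 - x)/2 - w*x := by linarith
        apply Real.log_le_log (by positivity)
        rw [hprod w, hphi w]
        nlinarith [mul_pos (by linarith : (0:ℝ) < w - z0 x)
          (by nlinarith : (0:ℝ) < 1 - x*(w + z0 x))]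
    exact key (Set.left_mem_Icc.mpr hgt.le) (Set.right_mem_Icc.mpr hgt.le) hgt.le
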